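/- Let (L,[·,·,·]) be a generalized Lie algebra of order 3 over a field k and let P: L → L be a Rota-Baxter operator of weight zero on it. Define a trilinear operation on L by {x,y,z} := [x,P(y),P(z)]. Then (L,{·,·,·}) is a generalized pre-Lie algebra of order 3. -/

import Mathlib

/-- The cyclic sum `○{x,y,z} = {x,y,z} + {y,z,x} + {z,x,y}` of a ternary operation. -/
def cyc3 {A : Type*} [AddCommGroup A] (f : A → A → A → A) : A → A → A → A :=
  fun x y z => f x y z + f y z x + f z x y

/-- A ternary operation is skew-symmetric:
`f(x_{σ(1)}, x_{σ(2)}, x_{σ(3)}) = sgn(σ) f(x₁, x₂, x₃)` for every permutation `σ`. -/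
def Skew3 {A : Type*} [AddCommGroup A] (f : A → A → A → A) : Prop :=
  ∀ (σ : Equiv.Perm (Fin 3)) (x : Fin 3 → A),
    f (x (σ 0)) (x (σ 1)) (x (σ 2)) = (Equiv.Perm.sign σ : ℤ) • f (x 0) (x 1) (x 2)

/-- A generalized Lie algebra of order 3. -/
def GenLie3 {A : Type*} [AddCommGroup A] (f : A → A → A → A) : Prop :=
  Skew3 f ∧
  ∀ x1 x2 x3 x4 x5 : A,
    f (f x1 x2 x3) x4 x5 - f (f x1 x2 x4) x3 x5 + f (f x1 x3 x4) x2 x5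
      - f (f x2 x3 x4) x1 x5 + f (f x1 x2 x5) x3 x4 + f (f x3 x4 x5) x1 x2
      - f (f x1 x3 x5) x2 x4 - f (f x2 x4 x5) x1 x3 + f (f x1 x4 x5) x2 x3
      + f (f x2 x3 x5) x1 x4 = 0

/-- The defining relations of a generalized pre-Lie algebra of order 3. -/
def GenPreLie3 {A : Type*} [AddCommGroup A] (f : A → A → A → A) : Prop :=
  (∀ x1 x2 x3 : A, f x1 x2 x3 = - f x1 x3 x2) ∧
  (∀ x1 x2 x3 x4 x5 : A,
    f (f x1 x2 x3) x4 x5 =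
      f (f x1 x2 x4) x3 x5 - f (f x1 x2 x5) x3 x4 - f (f x1 x3 x4) x2 x5
        + f (f x1 x3 x5) x2 x4 - f (f x1 x4 x5) x2 x3 - f x1 (cyc3 f x2 x3 x4) x5
        + f x1 (cyc3 f x2 x3 x5) x4 - f x1 (cyc3 f x2 x4 x5) x3
        + f x1 (cyc3 f x3 x4 x5) x2)

/-- Let `(L, [·,·,·])` be a generalized Lie algebra of order 3 over a field
`k` and `P` a Rota-Baxter operator of weight zero on it. Then `{x,y,z} := [x, P y, P z]`
makes `L` into a generalized pre-Lie algebra of order 3. -/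
theorem rotaBaxter_genLie3_genPreLie3 {k L : Type*} [Field k] [AddCommGroup L] [Module k L]
    (br : L →ₗ[k] L →ₗ[k] L →ₗ[k] L)
    (hbr : GenLie3 (fun x y z => br x y z))
    (P : L →ₗ[k] L)
    (hP : ∀ x y z : L,
      br (P x) (P y) (P z) = P (br x (P y) (P z) + br (P x) y (P z) + br (P x) (P y) z)) :
    GenPreLie3 (fun x y z => br x (P y) (P z)) := by
  have s01 : ∀ a b c : L, br b a c = - br a b c := by
    intro a b c
    have h := hbr.1 (Equiv.swap 0 1) ![a, b, c]
    have e : (Equiv.swap (0 : Fin 3) 1) 2 = 2 := by decide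
    simpa [e] using h
  have s23 : ∀ a b c : L, br a c b = - br a b c := by
    intro a b c
    have h := hbr.1 (Equiv.swap 1 2) ![a, b, c]
    have e : (Equiv.swap (1 : Fin 3) 2) 0 = 0 := by decide
    simpa [e] using h
  have rot : ∀ a b c : L, br a b c = br b c a := by
    intro a b c
    rw [s01 c b a, s23 c a b, s01 a c b, s23 a b c]
    simp
  have Pcyc : ∀ a b c : L,
      P (br a (P b) (P c) + br b (P c) (P a) + br c (P a) (P b)) = br (P a) (P b) (P c) := by
    intro a b c
    rw [hP a b c]
    congr 1
    rw [← rot (P a) b (P c), rot c (P a) (P b)]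
  constructor
  · intro x1 x2 x3
    exact s23 x1 (P x3) (P x2)
  · intro x1 x2 x3 x4 x5
    have h := hbr.2 x1 (P x2) (P x3) (P x4) (P x5)
    beta_reduce at h
    simp only [cyc3]
    rw [Pcyc x2 x3 x4, Pcyc x2 x3 x5, Pcyc x2 x4 x5, Pcyc x3 x4 x5]
    rw [s01 (br (P x2) (P x3) (P x4)) x1 (P x5),
        s01 (br (P x2) (P x3) (P x5)) x1 (P x4),
        s01 (br (P x2) (P x4) (P x5)) x1 (P x3),
        s01 (br (P x3) (P x4) (P x5)) x1 (P x2)]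
    rw [← sub_eq_zero, ← h]
    abel
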